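/- Define B(a,b,c) = Σ_{i=0}^{a-1} Σ_{j=0}^{b-1} Σ_{k=0}^{c-1} (i+j+k)!/(i!·j!·k!). Then for natural numbers a, b ≥ 0 and c ≥ 1, B(a,b,c+1) - B(a,b,c-1) = a·b·(a+b+2c)·(a+b+c-1)! / ((a+c)·(b+c)·a!·b!·c!). -/

import Mathlib

open Finset

/-- `B(a,b,c)`: triple sum of multinomial coefficients `(i+j+k)!/(i!j!k!)`
over `0 ≤ i < a`, `0 ≤ j < b`, `0 ≤ k < c`. -/
def B (a b c : ℕ) : ℚ :=
  ∑ i ∈ Finset.range a, ∑ j ∈ Finset.range b, ∑ k ∈ Finset.range c,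
    ((i + j + k).factorial : ℚ) / (i.factorial * j.factorial * k.factorial)

lemma fact_ne (n : ℕ) : (n.factorial : ℚ) ≠ 0 := by
  exact_mod_cast n.factorial_ne_zero

lemma innerL (a d : ℕ) : ∀ b : ℕ,
    ∑ j ∈ Finset.range b,
      ((a : ℚ) + j + 2 * d + 2) * ((a + j + d).factorial : ℚ) /
        ((a.factorial : ℚ) * j.factorial)
    = (b : ℚ) * (((a : ℚ) + d + 1) * ((a : ℚ) + b + 2 * d + 2) + (d + 1)) *
        ((a + b + d).factorial : ℚ) /
      (((a : ℚ) + d + 2) * ((a : ℚ) + d + 1) * a.factorial * b.factorial) := by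
  intro b
  induction b with
  | zero => simp
  | succ b ih =>
    rw [Finset.sum_range_succ, ih]
    have h1 : a + (b + 1) + d = (a + b + d) + 1 := by ring
    rw [h1, Nat.factorial_succ, Nat.factorial_succ]
    have hf1 := fact_ne a
    have hf2 := fact_ne b
    have hf3 := fact_ne (a + b + d)
    have h4 : ((a : ℚ) + d + 2) ≠ 0 := by positivity
    have h5 : ((a : ℚ) + d + 1) ≠ 0 := by positivity
    have h6 : ((b : ℚ) + 1) ≠ 0 := by positivity
    push_cast
    field_simp
    ring

lemma doubleL (b d : ℕ) : ∀ a : ℕ,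
    ∑ i ∈ Finset.range a, ∑ j ∈ Finset.range b,
      ((i : ℚ) + j + 2 * d + 2) * ((i + j + d).factorial : ℚ) /
        ((i.factorial : ℚ) * j.factorial)
    = (a : ℚ) * b * ((a : ℚ) + b + 2 * d + 2) * ((a + b + d).factorial : ℚ) /
      (((a : ℚ) + d + 1) * ((b : ℚ) + d + 1) * a.factorial * b.factorial) := by
  intro a
  induction a with
  | zero => simp
  | succ a ih =>
    rw [Finset.sum_range_succ, ih, innerL a d b]
    have h1 : (a + 1) + b + d = (a + b + d) + 1 := by ring
    rw [h1, Nat.factorial_succ, Nat.factorial_succ]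
    have hf1 := fact_ne a
    have hf2 := fact_ne b
    have hf3 := fact_ne (a + b + d)
    have h4 : ((a : ℚ) + d + 2) ≠ 0 := by positivity
    have h5 : ((a : ℚ) + d + 1) ≠ 0 := by positivity
    have h6 : ((b : ℚ) + d + 1) ≠ 0 := by positivity
    have h7 : ((a : ℚ) + 1) ≠ 0 := by positivity
    push_cast
    field_simp
    ring

theorem stmt17 (a b c : ℕ) (hc : 1 ≤ c) :
    B a b (c + 1) - B a b (c - 1) =
      (a : ℚ) * b * ((a : ℚ) + b + 2 * c) * ((a + b + c - 1).factorial : ℚ) /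
        (((a : ℚ) + c) * ((b : ℚ) + c) * a.factorial * b.factorial * c.factorial) := by
  obtain ⟨d, rfl⟩ : ∃ d, c = d + 1 := ⟨c - 1, by omega⟩
  have key : B a b (d + 1 + 1) - B a b (d + 1 - 1)
      = ∑ i ∈ Finset.range a, ∑ j ∈ Finset.range b,
          (((i : ℚ) + j + 2 * d + 2) * ((i + j + d).factorial : ℚ) /
            ((i.factorial : ℚ) * j.factorial)) / ((d + 1).factorial : ℚ) := by
    unfold B
    rw [← Finset.sum_sub_distrib]
    refine Finset.sum_congr rfl (fun i _ => ?_)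
    rw [← Finset.sum_sub_distrib]
    refine Finset.sum_congr rfl (fun j _ => ?_)
    have h0 : d + 1 - 1 = d := by omega
    rw [h0, Finset.sum_range_succ, Finset.sum_range_succ]
    have h1 : i + j + (d + 1) = (i + j + d) + 1 := by ring
    rw [h1, Nat.factorial_succ (i + j + d), Nat.factorial_succ d]
    have hf1 := fact_ne i
    have hf2 := fact_ne j
    have hf3 := fact_ne d
    have hf4 := fact_ne (i + j + d)
    have h5 : ((d : ℚ) + 1) ≠ 0 := by positivity
    push_cast
    field_simp
    ring
  rw [key]
  simp only [← Finset.sum_div]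
  rw [doubleL b d a]
  have h0 : a + b + (d + 1) - 1 = a + b + d := by omega
  rw [h0]
  have hf1 := fact_ne a
  have hf2 := fact_ne b
  have hf3 := fact_ne (d + 1)
  have h4 : ((a : ℚ) + d + 1) ≠ 0 := by positivity
  have h5 : ((b : ℚ) + d + 1) ≠ 0 := by positivity
  push_cast
  field_simp
  ring
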